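/- Let m, n be coprime positive integers and G = C_m ⋊ C_n a semidirect product in which, for every prime q dividing n, the Sylow q-subgroup of C_n acts nontrivially on C_m, and suppose that for every prime p dividing m and every prime q dividing |R_p| one has v_q(p-1) ≤ v_q(k_p), where R_p is the product of the Sylow q-subgroups of C_n acting nontrivially on the Sylow p-subgroup of C_m and k_p is the order of the kernel of the action of R_p on the Sylow p-subgroup. Then every prime divisor q of n satisfies: q divides k and q divides n/k, where k = ∏_p k_p is the order of the kernel of the action of C_n on C_m. In particular k ≠ 1. -/

import Mathlib

lemma mem_of_orderOf_dvd_card' {B : Type*} [Group B] [Finite B] [IsCyclic B]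
    (H : Subgroup B) (b : B) (h : orderOf b ∣ Nat.card H) : b ∈ H := by
  letI : Fintype B := Fintype.ofFinite B
  classical
  set d := Nat.card H with hd
  have hd0 : 0 < d := Nat.card_pos
  set S : Finset B := Finset.filter (fun a => a ^ d = 1) Finset.univ with hS
  set T : Finset B := Finset.filter (fun a => a ∈ H) Finset.univ with hT
  have hsub : T ⊆ S := by
    intro x hx
    simp only [hT, Finset.mem_filter, Finset.mem_univ, true_and] at hx
    simp only [hS, Finset.mem_filter, Finset.mem_univ, true_and]
    have h1 : orderOf (⟨x, hx⟩ : H) ∣ d := hd ▸ orderOf_dvd_natCard _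
    have h2 : orderOf x ∣ d := by simpa [Subgroup.orderOf_coe] using h1
    exact orderOf_dvd_iff_pow_eq_one.mp h2
  have hcard : S.card ≤ d := by
    have h' := IsCyclic.card_pow_eq_one_le (α := B) (n := d) hd0
    refine le_trans (Finset.card_le_card ?_) h'
    intro x hx
    simp only [hS, Finset.mem_filter, Finset.mem_univ, true_and] at hx
    simp only [Finset.mem_filter, Finset.mem_univ, true_and]
    exact hx
  have hcard2 : T.card = d := by
    rw [hT, hd, Nat.card_eq_fintype_card]
    exact (Fintype.card_subtype _).symm
  have heq := Finset.eq_of_subset_of_card_le hsub (by omega)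
  have hb : b ∈ S := by
    simp only [hS, Finset.mem_filter, Finset.mem_univ, true_and]
    exact orderOf_dvd_iff_pow_eq_one.mp h
  rw [← heq] at hb
  simpa only [hT, Finset.mem_filter, Finset.mem_univ, true_and] using hb


-- restriction of an action to an invariant subgroup
def restrictAut {A B : Type*} [Group A] [Group B] (φ : B →* MulAut A) (H : Subgroup A)
    (hH : ∀ b : B, ∀ x ∈ H, φ b x ∈ H) : B →* MulAut H where
  toFun b :=
    { toFun := fun x => ⟨φ b x, hH b x x.2⟩
      invFun := fun x => ⟨φ b⁻¹ x, hH b⁻¹ x x.2⟩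
      left_inv := fun x => by
        ext
        simp [map_inv]
      right_inv := fun x => by
        ext
        simp [map_inv]
      map_mul' := fun x y => by
        ext
        simp }
  map_one' := by
    ext x
    simp
  map_mul' := fun b c => by
    ext x
    simp

lemma restrictAut_apply' {A B : Type*} [Group A] [Group B] (φ : B →* MulAut A) (H : Subgroup A)
    (hH : ∀ b : B, ∀ x ∈ H, φ b x ∈ H) (b : B) (x : H) :
    ((restrictAut φ H hH b x : H) : A) = φ b (x : A) := rfl

lemma mem_ker_restrictAut {A B : Type*} [Group A] [Group B] (φ : B →* MulAut A) (H : Subgroup A)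
    (hH : ∀ b : B, ∀ x ∈ H, φ b x ∈ H) (b : B) :
    b ∈ (restrictAut φ H hH).ker ↔ ∀ x ∈ H, φ b x = x := by
  rw [MonoidHom.mem_ker]
  constructor
  · intro h x hx
    have := congrArg (Subtype.val) (congrFun (congrArg (fun (e : MulAut H) => (e : H → H)) h) ⟨x, hx⟩)
    simpa [restrictAut_apply'] using this
  · intro h
    ext x
    exact h x x.2


lemma mulAut_eq_self_of_primepow_fixed' {A : Type*} [Group A] [IsCyclic A] [Finite A] (f : MulAut A)
    (h : ∀ (p : ℕ), p.Prime → ∀ y : A, (∃ k, orderOf y = p ^ k) → f y = y) (x : A) :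
    f x = x := by
  letI : CommGroup A := IsCyclic.commGroup
  have main : ∀ d : ℕ, ∀ x : A, orderOf x = d → f x = x := by
    intro d
    induction d using Nat.strong_induction_on with
    | _ d ih =>
      intro x hx
      have hd0 : 0 < d := hx ▸ (orderOf_pos x)
      rcases Nat.lt_or_ge d 2 with h1 | h2
      · have : orderOf x = 1 := by omega
        rw [orderOf_eq_one_iff.mp this, map_one]
      · -- d ≥ 2
        set p := d.minFac with hp
        have hpp : p.Prime := Nat.minFac_prime (by omega)
        set v := d.factorization p with hv
        have hv1 : 1 ≤ v := Nat.Prime.factorization_pos_of_dvd hpp hd0.ne' (Nat.minFac_dvd d)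
        set a := p ^ v with ha
        set c := d / a with hc
        have hadvd : a ∣ d := Nat.ordProj_dvd d p
        have hdac : d = a * c := (Nat.mul_div_cancel' hadvd).symm
        have ha0 : 0 < a := pow_pos hpp.pos v
        have hc0 : 0 < c := Nat.div_pos (Nat.le_of_dvd hd0 hadvd) ha0
        have ha1 : 1 < a := Nat.one_lt_pow (by omega) hpp.one_lt
        have hcd : c < d := by
          calc c = 1 * c := (one_mul c).symm
          _ < a * c := (Nat.mul_lt_mul_right hc0).mpr ha1
          _ = d := hdac.symm
        have hpc : ¬ p ∣ c := Nat.not_dvd_ordCompl hpp hd0.ne'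
        have hcop : Nat.Coprime a c :=
          Nat.Coprime.pow_left v ((Nat.Prime.coprime_iff_not_dvd hpp).mpr hpc)
        -- Bezout
        have hbez : (1 : ℤ) = a * Nat.gcdA a c + c * Nat.gcdB a c := by
          have := Nat.gcd_eq_gcd_ab a c
          rwa [hcop.gcd_eq_one] at this
        set s := Nat.gcdA a c
        set t := Nat.gcdB a c
        have hxdecomp : x = (x ^ a) ^ s * (x ^ c) ^ t := by
          have hz : (x ^ (a : ℤ)) ^ s * (x ^ (c : ℤ)) ^ t = x := by
            rw [← zpow_mul, ← zpow_mul, ← zpow_add, ← hbez, zpow_one]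
          rw [zpow_natCast x a, zpow_natCast x c] at hz
          exact hz.symm
        have hga : Nat.gcd d a = a := Nat.gcd_eq_right hadvd
        have hcdvd : c ∣ d := ⟨a, by rw [hdac, Nat.mul_comm]⟩
        have hgc : Nat.gcd d c = c := Nat.gcd_eq_right hcdvd
        have hfix1 : f (x ^ a) = x ^ a := by
          apply ih c hcd
          rw [orderOf_pow, hx, hga]
        have hfix2 : f (x ^ c) = x ^ c := by
          apply h p hpp
          refine ⟨v, ?_⟩
          rw [orderOf_pow, hx, hgc, hdac, Nat.mul_div_cancel _ hc0]
        calc f x = f ((x ^ a) ^ s * (x ^ c) ^ t) := by rw [← hxdecomp]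
        _ = (f (x ^ a)) ^ s * (f (x ^ c)) ^ t := by rw [map_mul, map_zpow, map_zpow]
        _ = (x ^ a) ^ s * (x ^ c) ^ t := by rw [hfix1, hfix2]
        _ = x := hxdecomp.symm
  exact main (orderOf x) x rfl


lemma mem_sylow_of_orderOf_ppow' {A : Type*} [Group A] [IsCyclic A] [Finite A] {p : ℕ}
    [Fact p.Prime] (P : Sylow p A) {y : A} {k : ℕ} (hy : orderOf y = p ^ k) : y ∈ P := by
  letI : CommGroup A := IsCyclic.commGroup
  have hpg : IsPGroup p (Subgroup.zpowers y) := by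
    apply IsPGroup.of_card
    rw [Nat.card_zpowers, hy]
  obtain ⟨Q, hQ⟩ := hpg.exists_le_sylow
  haveI : (Q : Subgroup A).Normal := inferInstance
  haveI := Sylow.unique_of_normal Q this
  have : Q = P := Subsingleton.elim Q P
  exact this ▸ hQ (Subgroup.mem_zpowers y)


/-- For a semidirect product `C_m ⋊ C_n` (modelled by cyclic groups `A` of order `m` and
`B` of order `n` with action `φ : B →* Aut(A)`), with `gcd(m,n) = 1`, such that every
Sylow `q`-subgroup of `B` acts nontrivially on `A` and for every prime `p ∣ m` and prime
`q ∣ |R_p|` one has `v_q(p-1) ≤ v_q(k_p)`, every prime divisor `q` of `n` divides both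
`k` and `n/k`, where `k` is the order of the kernel of the action; in particular `k ≠ 1`. -/
theorem prime_divisors_of_n_divide_k_and_n_div_k
    (m n : ℕ) (hm1 : 1 < m) (hn1 : 1 < n) (hcop : Nat.Coprime m n)
    (A B : Type*) [Group A] [Group B] [Finite A] [Finite B]
    [IsCyclic A] [IsCyclic B] (hA : Nat.card A = m) (hB : Nat.card B = n)
    (φ : B →* MulAut A)
    (hact : ∀ q : ℕ, q.Prime → q ∣ n → ∀ Qq : Sylow q B,
      ∃ b ∈ Qq, ∃ x : A, φ b x ≠ x)
    (hval : ∀ p : ℕ, p.Prime → p ∣ m → ∀ Pp : Sylow p A, ∀ Rp : Subgroup B,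
      Rp = (⨆ q ∈ {q : ℕ | q.Prime ∧ ∃ Qq : Sylow q B, ∃ b ∈ Qq,
              ∃ x ∈ (Pp : Subgroup A), φ b x ≠ x},
            ⨆ Qq : Sylow q B, (Qq : Subgroup B)) →
      ∀ kp : ℕ, kp = Nat.card {b : B // b ∈ Rp ∧ ∀ x ∈ (Pp : Subgroup A), φ b x = x} →
      ∀ q : ℕ, q.Prime → q ∣ Nat.card ↥Rp →
        (p - 1).factorization q ≤ kp.factorization q) :
    (∀ q : ℕ, q.Prime → q ∣ n →
      q ∣ Nat.card φ.ker ∧ q ∣ n / Nat.card φ.ker) ∧ Nat.card φ.ker ≠ 1 := by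
  have hn0 : n ≠ 0 := by omega
  have hm0 : m ≠ 0 := by omega
  -- invariance of Sylow subgroups of A
  have hinv : ∀ (p : ℕ), p.Prime → ∀ (P : Sylow p A) (b : B), ∀ x ∈ (P : Subgroup A),
      φ b x ∈ (P : Subgroup A) := by
    intro p hp P b x hx
    haveI := Fact.mk hp
    obtain ⟨k, hk⟩ := IsPGroup.iff_orderOf.mp P.isPGroup' ⟨x, hx⟩
    rw [← Subgroup.orderOf_coe] at hk
    have hfk : orderOf (φ b x) = p ^ k := by
      have h' := orderOf_injective (φ b).toMonoidHom (φ b).injective x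
      simp only [MulEquiv.coe_toMonoidHom] at h'
      rw [h']
      exact hk
    exact mem_sylow_of_orderOf_ppow' P hfk
  -- the key claim
  have claim : ∀ q : ℕ, q.Prime → q ∣ n → ∀ p : ℕ, (hp : p.Prime) → p ∣ m →
      ∀ P : Sylow p A,
      q ∣ Nat.card (restrictAut φ (P : Subgroup A) (fun b x hx => hinv p ‹p.Prime› P b x hx)).ker := by
    intro q hq hqn p hp hpm P
    haveI := Fact.mk hq
    haveI := Fact.mk hp
    set ψ := restrictAut φ (P : Subgroup A) (fun b x hx => hinv p hp P b x hx) with hψ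
    obtain ⟨Q⟩ : Nonempty (Sylow q B) := inferInstance
    have hcardQ : Nat.card Q = q ^ (n.factorization q) := by
      rw [Sylow.card_eq_multiplicity, hB]
    have he1 : 1 ≤ n.factorization q := hq.factorization_pos_of_dvd hn0 hqn
    have hqQ : q ∣ Nat.card Q := by
      rw [hcardQ]
      exact dvd_pow_self q (by omega)
    by_cases hcase : ∃ b ∈ Q, ∃ x ∈ (P : Subgroup A), φ b x ≠ x
    · obtain ⟨b, hbQ, x, hxP, hne⟩ := hcase
      set Rp : Subgroup B := (⨆ q ∈ {q : ℕ | q.Prime ∧ ∃ Qq : Sylow q B, ∃ b ∈ Qq,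
              ∃ x ∈ (P : Subgroup A), φ b x ≠ x},
            ⨆ Qq : Sylow q B, (Qq : Subgroup B)) with hRp
      have hqS : q ∈ {q : ℕ | q.Prime ∧ ∃ Qq : Sylow q B, ∃ b ∈ Qq,
              ∃ x ∈ (P : Subgroup A), φ b x ≠ x} := ⟨hq, Q, b, hbQ, x, hxP, hne⟩
      have hQle : (Q : Subgroup B) ≤ Rp := by
        refine le_trans (le_iSup (fun (Qq : Sylow q B) => (Qq : Subgroup B)) Q) ?_
        exact le_iSup₂ (f := fun (q' : ℕ) (_ : q' ∈ {q : ℕ | q.Prime ∧ ∃ Qq : Sylow q B,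
          ∃ b ∈ Qq, ∃ x ∈ (P : Subgroup A), φ b x ≠ x}) =>
          ⨆ Qq : Sylow q' B, (Qq : Subgroup B)) q hqS
      have hqRp : q ∣ Nat.card Rp := hqQ.trans (Subgroup.card_dvd_of_le hQle)
      set kp := Nat.card {b : B // b ∈ Rp ∧ ∀ x ∈ (P : Subgroup A), φ b x = x} with hkp
      have hval' := hval p hp hpm P Rp hRp kp hkp q hq hqRp
      -- q divides p - 1
      have hbne : ψ b ≠ 1 := by
        intro hcontr
        exact hne (((mem_ker_restrictAut φ _ _ b).mp (MonoidHom.mem_ker.mpr hcontr)) x hxP)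
      have hordb : orderOf b ∣ q ^ (n.factorization q) := by
        rw [← hcardQ]
        exact Subgroup.orderOf_dvd_natCard (Q : Subgroup B) hbQ
      have hordψ : orderOf (ψ b) ∣ q ^ (n.factorization q) :=
        (orderOf_map_dvd ψ b).trans hordb
      obtain ⟨i, hile, hordeq⟩ := (Nat.dvd_prime_pow hq).mp hordψ
      have hi1 : 1 ≤ i := by
        rcases Nat.eq_zero_or_pos i with rfl | h
        · exfalso
          exact hbne (orderOf_eq_one_iff.mp (by simpa using hordeq))
        · exact h
      have hqord : q ∣ orderOf (ψ b) := hordeq ▸ dvd_pow_self q (by omega)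
      have hqaut : q ∣ Nat.card (MulAut ↥(P : Subgroup A)) :=
        hqord.trans (orderOf_dvd_natCard _)
      have hcardP : Nat.card ↥(P : Subgroup A) = p ^ (m.factorization p) := by
        rw [Sylow.card_eq_multiplicity, hA]
      have ha1 : 1 ≤ m.factorization p := hp.factorization_pos_of_dvd hm0 hpm
      have htot : Nat.card (MulAut ↥(P : Subgroup A)) =
          p ^ (m.factorization p - 1) * (p - 1) := by
        rw [IsCyclic.card_mulAut, hcardP, Nat.totient_prime_pow hp (by omega)]
      have hqp1 : q ∣ p - 1 := by
        rw [htot] at hqaut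
        rcases (Nat.Prime.dvd_mul hq).mp hqaut with h | h
        · exfalso
          have : q = p := (Nat.prime_dvd_prime_iff_eq hq hp).mp (hq.dvd_of_dvd_pow h)
          have hqm : q ∣ m := this ▸ hpm
          have h1 : q ∣ 1 := hcop ▸ Nat.dvd_gcd hqm hqn
          exact hq.one_lt.ne' (Nat.dvd_one.mp h1)
        · exact h
      have hp1ne : p - 1 ≠ 0 := by have := hp.two_le; omega
      have h1 : 1 ≤ (p - 1).factorization q := hq.factorization_pos_of_dvd hp1ne hqp1
      have h2 : 1 ≤ kp.factorization q := le_trans h1 hval'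
      have hqkp : q ∣ kp := Nat.dvd_of_factorization_pos (by omega)
      have hkp2 : kp = Nat.card ↥(Rp ⊓ ψ.ker) := by
        apply Nat.card_congr
        apply Equiv.subtypeEquivRight
        intro b'
        rw [Subgroup.mem_inf, mem_ker_restrictAut]
      rw [hkp2] at hqkp
      exact hqkp.trans (Subgroup.card_dvd_of_le inf_le_right)
    · push_neg at hcase
      have hQker : (Q : Subgroup B) ≤ ψ.ker := by
        intro b hb
        exact (mem_ker_restrictAut φ _ _ b).mpr (hcase b hb)
      exact hqQ.trans (Subgroup.card_dvd_of_le hQker)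
  -- main statement
  have part1 : ∀ q : ℕ, q.Prime → q ∣ n → q ∣ Nat.card φ.ker := by
    intro q hq hqn
    haveI := Fact.mk hq
    obtain ⟨b0, hb0⟩ := exists_prime_orderOf_dvd_card' (G := B) q (hB ▸ hqn)
    have hb0mem : ∀ (p : ℕ) (hp : p.Prime), p ∣ m → ∀ P : Sylow p A,
        b0 ∈ (restrictAut φ (P : Subgroup A) (fun b x hx => hinv p hp P b x hx)).ker := by
      intro p hp hpm P
      apply mem_of_orderOf_dvd_card'
      rw [hb0]
      exact claim q hq hqn p hp hpm P
    have hb0ker : b0 ∈ φ.ker := by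
      rw [MonoidHom.mem_ker]
      have hfix : ∀ x : A, φ b0 x = x := by
        apply mulAut_eq_self_of_primepow_fixed'
        rintro p hp y ⟨k, hk⟩
        haveI := Fact.mk hp
        rcases Nat.eq_zero_or_pos k with rfl | hk1
        · rw [pow_zero] at hk
          rw [orderOf_eq_one_iff.mp hk, map_one]
        · have hpm : p ∣ m := by
            have h1 : orderOf y ∣ m := hA ▸ orderOf_dvd_natCard y
            rw [hk] at h1
            exact (hp.dvd_of_dvd_pow (dvd_pow_self p hk1.ne')).trans
              ((dvd_pow_self p hk1.ne').trans h1)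
          obtain ⟨P⟩ : Nonempty (Sylow p A) := inferInstance
          have hyP : y ∈ (P : Subgroup A) := mem_sylow_of_orderOf_ppow' P hk
          exact ((mem_ker_restrictAut φ _ _ b0).mp (hb0mem p hp hpm P)) y hyP
      ext x
      exact hfix x
    exact hb0 ▸ Subgroup.orderOf_dvd_natCard φ.ker hb0ker
  have part2 : ∀ q : ℕ, q.Prime → q ∣ n → q ∣ n / Nat.card φ.ker := by
    intro q hq hqn
    haveI := Fact.mk hq
    by_contra hndk
    set k := Nat.card φ.ker with hk
    have hkdvd : k ∣ n := hB ▸ Subgroup.card_subgroup_dvd_card φ.ker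
    have hk0 : k ≠ 0 := Nat.card_pos.ne'
    have hfac0 : (n / k).factorization q = 0 := Nat.factorization_eq_zero_of_not_dvd hndk
    have hfacdiv := Nat.factorization_div hkdvd
    have hfaceq : n.factorization q = k.factorization q := by
      have h1 : (n / k).factorization q = n.factorization q - k.factorization q := by
        rw [hfacdiv]; rfl
      have h2 : k.factorization q ≤ n.factorization q :=
        (Nat.factorization_le_iff_dvd hk0 hn0).mpr hkdvd q
      omega
    obtain ⟨Q⟩ : Nonempty (Sylow q B) := inferInstance
    have hcardQ : Nat.card Q = q ^ (n.factorization q) := by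
      rw [Sylow.card_eq_multiplicity, hB]
    have hQk : Nat.card Q ∣ k := by
      rw [hcardQ, hfaceq]
      exact Nat.ordProj_dvd k q
    obtain ⟨b, hbQ, x, hne⟩ := hact q hq hqn Q
    have hbker : b ∈ φ.ker := by
      apply mem_of_orderOf_dvd_card'
      refine dvd_trans ?_ hQk
      exact Subgroup.orderOf_dvd_natCard (Q : Subgroup B) hbQ
    have : φ b = 1 := MonoidHom.mem_ker.mp hbker
    rw [this] at hne
    exact hne rfl
  refine ⟨fun q hq hqn => ⟨part1 q hq hqn, part2 q hq hqn⟩, ?_⟩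
  intro hk1
  obtain hq := Nat.minFac_prime (show n ≠ 1 by omega)
  have := part1 n.minFac hq (Nat.minFac_dvd n)
  rw [hk1] at this
  exact hq.one_lt.ne' (Nat.eq_one_of_dvd_one this)
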